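/- Let G be a nut graph with nonzero kernel vector x, and let T = {v_1,…,v_k} ⊆ V(G). Suppose there exists a nonempty subset S ⊆ V(G) with S ∩ T = ∅ such that Σ_{v∈S} x_v = 0 and the characteristic vector χ_S is not equal to any row of A_G. Let F be the graph obtained from G by adding, for each i, m_i ≥ 1 new vertices, each having neighbourhood in F exactly equal to N_G(v_i) (duplicates of v_i, not adjacent to v_i, pairwise non-adjacent). Then F satisfies the ACK property. -/
import Mathlib


open Matrix in

lemma aux_mem_range {V : Type} [Fintype V] [DecidableEq V] (A : Matrix V V ℝ)
    (hsym : Aᵀ = A) (x : V → ℝ) (hx : x ≠ 0) (hker : A.mulVec x = 0)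
    (hrk : Module.finrank ℝ ↥(LinearMap.ker A.mulVecLin) = 1)
    (y : V → ℝ) (hy : ∑ u, y u * x u = 0) : ∃ c, A.mulVec c = y := by
  classical
  set f : (V → ℝ) →ₗ[ℝ] ℝ := ∑ u, x u • LinearMap.proj u with hf
  have hsymm : ∀ a b, A a b = A b a := fun a b =>
    (congrFun (congrFun hsym a) b).symm
  have hfapp : ∀ z : V → ℝ, f z = ∑ u, x u * z u := by
    intro z
    simp [hf, LinearMap.sum_apply]
  obtain ⟨u0, hu0⟩ : ∃ u, x u ≠ 0 := by
    by_contra h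
    push_neg at h
    exact hx (funext h)
  have hsurj : Function.Surjective f := by
    intro r
    refine ⟨(r / x u0) • (Pi.single u0 1 : V → ℝ), ?_⟩
    rw [LinearMap.map_smul, hfapp]
    rw [Finset.sum_eq_single u0]
    · simp
      field_simp
    · intro b _ hb; simp [Pi.single_eq_of_ne hb]
    · simp
  have hrange : LinearMap.range f = ⊤ := LinearMap.range_eq_top.2 hsurj
  have hcard : Module.finrank ℝ (V → ℝ) = Fintype.card V := by
    simp [Module.finrank_pi]
  have hkerf : Module.finrank ℝ ↥(LinearMap.ker f) = Fintype.card V - 1 := by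
    have h1 := LinearMap.finrank_range_add_finrank_ker f
    rw [hrange, hcard] at h1
    simp at h1
    omega
  have hrangeL : Module.finrank ℝ ↥(LinearMap.range A.mulVecLin)
      = Fintype.card V - 1 := by
    have h1 := LinearMap.finrank_range_add_finrank_ker A.mulVecLin
    rw [hrk, hcard] at h1
    omega
  have hle : LinearMap.range A.mulVecLin ≤ LinearMap.ker f := by
    rintro z ⟨c, rfl⟩
    rw [LinearMap.mem_ker, hfapp]
    have : ∀ u, x u * (A.mulVecLin c) u = ∑ w, (A u w * c w) * x u := by
      intro u
      rw [Matrix.mulVecLin_apply, Matrix.mulVec, dotProduct, Finset.mul_sum]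
      exact Finset.sum_congr rfl fun w _ => by ring
    rw [Finset.sum_congr rfl fun u _ => this u, Finset.sum_comm]
    have : ∀ w, ∑ u, A u w * c w * x u = c w * (A.mulVec x) w := by
      intro w
      rw [Matrix.mulVec, dotProduct, Finset.mul_sum]
      exact Finset.sum_congr rfl fun u _ => by rw [hsymm u w]; ring
    rw [Finset.sum_congr rfl fun w _ => this w]
    simp [hker]
  have heq : LinearMap.range A.mulVecLin = LinearMap.ker f :=
    Submodule.eq_of_le_of_finrank_eq hle (by rw [hrangeL, hkerf])
  have hymem : y ∈ LinearMap.ker f := by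
    rw [LinearMap.mem_ker, hfapp, ← hy]
    exact Finset.sum_congr rfl fun u _ => mul_comm _ _
  rw [← heq] at hymem
  obtain ⟨c, hc⟩ := hymem
  exact ⟨c, hc⟩

/-- The graph obtained from `G` by adding, for each `i : Fin k`, `m i` new vertices
(`Sum.inr ⟨i, j⟩`), each of whose neighbourhood is exactly `N_G (v i)`: each new vertex
duplicates `v i`, is not adjacent to `v i`, and the new vertices are pairwise
non-adjacent. -/
def dupGraph {V : Type} (G : SimpleGraph V) (k : ℕ) (v : Fin k → V) (m : Fin k → ℕ) :
    SimpleGraph (V ⊕ (Σ i : Fin k, Fin (m i))) :=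
  SimpleGraph.fromRel fun a b =>
    match a, b with
    | Sum.inl u, Sum.inl w => G.Adj u w
    | Sum.inr ⟨i, _⟩, Sum.inl u => G.Adj (v i) u
    | _, _ => False

noncomputable instance {V : Type} (G : SimpleGraph V) (k : ℕ) (v : Fin k → V)
    (m : Fin k → ℕ) : DecidableRel (dupGraph G k v m).Adj := Classical.decRel _


/-- A graph `G` satisfies the ACK property if there is a nonzero `{0,1}`-vector in the row
space of its adjacency matrix `A_G` (over `ℝ`) that is not equal to any row of `A_G`. -/
def AckProp {V : Type} [Fintype V] (G : SimpleGraph V) [DecidableRel G.Adj] : Prop :=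
  ∃ y : V → ℝ, y ≠ 0 ∧ (∀ v, y v = 0 ∨ y v = 1) ∧
    y ∈ Submodule.span ℝ (Set.range fun i => (G.adjMatrix ℝ) i) ∧
    ∀ i, y ≠ (G.adjMatrix ℝ) i

lemma dupGraph_adj_inl_inl {V : Type} (G : SimpleGraph V) (k : ℕ) (v : Fin k → V)
    (m : Fin k → ℕ) (u w : V) :
    (dupGraph G k v m).Adj (Sum.inl u) (Sum.inl w) ↔ G.Adj u w := by
  constructor
  · rintro ⟨hne, h | h⟩
    · exact h
    · exact h.symm
  · intro h
    exact ⟨by simp [G.ne_of_adj h], Or.inl h⟩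

lemma dupGraph_adj_inr_inl {V : Type} (G : SimpleGraph V) (k : ℕ) (v : Fin k → V)
    (m : Fin k → ℕ) (i : Fin k) (j : Fin (m i)) (u : V) :
    (dupGraph G k v m).Adj (Sum.inr ⟨i, j⟩) (Sum.inl u) ↔ G.Adj (v i) u := by
  constructor
  · rintro ⟨hne, h | h⟩
    · exact h
    · exact h.elim
  · intro h
    exact ⟨by simp, Or.inl h⟩

lemma dupGraph_adj_inr_inr {V : Type} (G : SimpleGraph V) (k : ℕ) (v : Fin k → V)
    (m : Fin k → ℕ) (p q : Σ i : Fin k, Fin (m i)) :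
    ¬ (dupGraph G k v m).Adj (Sum.inr p) (Sum.inr q) := by
  obtain ⟨i, j⟩ := p
  obtain ⟨i', j'⟩ := q
  rintro ⟨hne, h | h⟩ <;> exact h


/-- Let `G` be a nut graph with kernel vector `x`, and let `S` be a nonempty zero-sum
subset (relative to `x`) disjoint from `T = {v 1, …, v k}` whose characteristic vector is
not a row of `A_G`.  Then the graph `F` obtained from `G` by duplicating each `v i`
(`m i ≥ 1` times) satisfies the ACK property. -/
theorem dupGraph_ackProp {V : Type} [Fintype V] [DecidableEq V]
    (G : SimpleGraph V) [DecidableRel G.Adj]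
    (hnut1 : Module.finrank ℝ ↥(LinearMap.ker (G.adjMatrix ℝ).mulVecLin) = 1)
    (hnut2 : ∀ y : V → ℝ, (G.adjMatrix ℝ).mulVec y = 0 → y ≠ 0 → ∀ u, y u ≠ 0)
    (x : V → ℝ) (hx : x ≠ 0) (hker : (G.adjMatrix ℝ).mulVec x = 0)
    (k : ℕ) (v : Fin k → V)
    (S : Finset V) (hS : S.Nonempty) (hdisj : ∀ i, v i ∉ S)
    (hsum : ∑ u ∈ S, x u = 0)
    (hnd : ∀ i, (fun u => if u ∈ S then (1 : ℝ) else 0) ≠ (G.adjMatrix ℝ) i)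
    (m : Fin k → ℕ) (hm : ∀ i, 1 ≤ m i) :
    AckProp (dupGraph G k v m) := by
  classical
  set A := G.adjMatrix ℝ with hA
  have hsymm : ∀ a b, A a b = A b a := fun a b =>
    (congrFun (congrFun (G.transpose_adjMatrix (α := ℝ)) a) b).symm
  set χ : V → ℝ := fun u => if u ∈ S then 1 else 0 with hχ
  have hy : ∑ u, χ u * x u = 0 := by
    rw [← hsum]
    simp only [hχ, ite_mul, one_mul, zero_mul]
    rw [Finset.sum_ite_mem, Finset.univ_inter]
  obtain ⟨c, hc⟩ := aux_mem_range A (G.transpose_adjMatrix) x hx hker hnut1 χ hy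
  set F := dupGraph G k v m with hF
  set AF := F.adjMatrix ℝ with hAF
  have hA1 : ∀ u w : V, AF (Sum.inl u) (Sum.inl w) = A u w := by
    intro u w
    rw [hAF, SimpleGraph.adjMatrix_apply, hA, SimpleGraph.adjMatrix_apply]
    congr 1
    rw [hF]
    exact propext (dupGraph_adj_inl_inl G k v m u w)
  have hA2 : ∀ (u : V) (i : Fin k) (j : Fin (m i)),
      AF (Sum.inl u) (Sum.inr ⟨i, j⟩) = A (v i) u := by
    intro u i j
    rw [hAF, SimpleGraph.adjMatrix_apply, hA, SimpleGraph.adjMatrix_apply]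
    congr 1
    rw [(F.adj_comm _ _), hF]
    exact propext (dupGraph_adj_inr_inl G k v m i j u)
  have hA4 : ∀ (i : Fin k) (j : Fin (m i)) (u : V),
      AF (Sum.inr ⟨i, j⟩) (Sum.inl u) = A (v i) u := by
    intro i j u
    rw [hAF, SimpleGraph.adjMatrix_apply, hA, SimpleGraph.adjMatrix_apply]
    congr 1
    exact propext (dupGraph_adj_inr_inl G k v m i j u)
  set y : (V ⊕ (Σ i : Fin k, Fin (m i))) → ℝ := Sum.elim χ 0 with hy'
  have key : y = ∑ u : V, c u • AF (Sum.inl u) := by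
    funext w
    rw [Finset.sum_apply]
    cases w with
    | inl w =>
      have : ∀ u : V, (c u • AF (Sum.inl u)) (Sum.inl w) = A w u * c u := by
        intro u
        simp [hA1, hsymm u w, mul_comm]
      rw [Finset.sum_congr rfl fun u _ => this u]
      have := congrFun hc w
      rw [Matrix.mulVec, dotProduct] at this
      simpa [hy'] using this.symm
    | inr p =>
      obtain ⟨i, j⟩ := p
      have : ∀ u : V, (c u • AF (Sum.inl u)) (Sum.inr ⟨i, j⟩) = A (v i) u * c u := by
        intro u
        simp [hA2, mul_comm]
      rw [Finset.sum_congr rfl fun u _ => this u]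
      have := congrFun hc (v i)
      rw [Matrix.mulVec, dotProduct] at this
      rw [this]
      simp [hy', hχ, hdisj i]
  refine ⟨y, ?_, ?_, ?_, ?_⟩
  · obtain ⟨s, hs⟩ := hS
    intro h
    have := congrFun h (Sum.inl s)
    simp [hy', hχ, hs] at this
  · rintro (u | p)
    · by_cases h : u ∈ S <;> simp [hy', hχ, h]
    · left; simp [hy']
  · rw [key]
    exact Submodule.sum_smul_mem _ _ fun u _ =>
      Submodule.subset_span ⟨Sum.inl u, rfl⟩
  · rintro (u | ⟨i, j⟩) h
    · apply hnd u
      funext w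
      have := congrFun h (Sum.inl w)
      simpa [hy', hχ] using this.trans (hA1 u w)
    · apply hnd (v i)
      funext w
      have := congrFun h (Sum.inl w)
      simpa [hy', hχ] using this.trans (hA4 i j w)
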